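/- There is no GML formula equivalent to the RML formula ◊^{≥1/2}P, that is, there is no GML formula ψ such that for all pointed Π-labeled graphs (G,v) with P ∈ Π: G,v ⊨ ψ iff G,v ⊨ ◊^{≥1/2}P. -/

import Mathlib

open scoped Classical

/-- A `α`-labeled finite directed graph. -/
structure LabeledGraph (α : Type) : Type 1 where
  V : Type
  [fintypeV : Fintype V]
  adj : V → V → Prop
  label : V → α → Prop

attribute [instance] LabeledGraph.fintypeV

namespace LabeledGraph

variable {α : Type}

/-- The neighborhood (set of successors) of a vertex. -/
def nbhd (G : LabeledGraph α) (v : G.V) : Set G.V := {u | G.adj v u}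

/-- The neighborhood of a vertex, as a finset. -/
noncomputable def nbhdFinset (G : LabeledGraph α) (v : G.V) : Finset G.V :=
  Finset.univ.filter (fun u => G.adj v u)

/-- The `c`-scaling of a graph: each vertex is multiplied `c` times. -/
def scale (G : LabeledGraph α) (c : ℕ) : LabeledGraph α where
  V := G.V × Fin c
  adj := fun p q => G.adj p.1 q.1
  label := fun p => G.label p.1

end LabeledGraph

/-- Formulas of modal logic ML. -/
inductive ML (α : Type) : Type where
  | atom : α → ML α
  | neg  : ML α → ML α
  | or   : ML α → ML α → ML α
  | dia  : ML α → ML α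

/-- Satisfaction for ML. -/
def ML.sat {α : Type} (G : LabeledGraph α) : ML α → G.V → Prop
  | .atom p, v => G.label v p
  | .neg φ, v => ¬ ML.sat G φ v
  | .or φ ψ, v => ML.sat G φ v ∨ ML.sat G ψ v
  | .dia φ, v => ∃ u, G.adj v u ∧ ML.sat G φ u

/-- Formulas of graded modal logic GML. -/
inductive GML (α : Type) : Type where
  | atom : α → GML α
  | neg  : GML α → GML α
  | or   : GML α → GML α → GML α
  | dia  : ℕ → GML α → GML α

/-- Satisfaction for GML: `dia n φ` is `◊^{≥n} φ`. -/
def GML.sat {α : Type} (G : LabeledGraph α) : GML α → G.V → Prop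
  | .atom p, v => G.label v p
  | .neg φ, v => ¬ GML.sat G φ v
  | .or φ ψ, v => GML.sat G φ v ∨ GML.sat G ψ v
  | .dia n φ, v => n ≤ {u | G.adj v u ∧ GML.sat G φ u}.ncard

/-- Formulas of ratio modal logic RML; diamonds carry a ratio `r ∈ [0,1]`. -/
inductive RML (α : Type) : Type where
  | atom  : α → RML α
  | neg   : RML α → RML α
  | or    : RML α → RML α → RML α
  | diaGe : Set.Icc (0:ℝ) 1 → RML α → RML α
  | diaGt : Set.Icc (0:ℝ) 1 → RML α → RML α

/-- Satisfaction for RML. If a vertex has no successors then `◊^{≥r}φ`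
holds and `◊^{>r}φ` fails; otherwise the fraction of successors satisfying
`φ` is compared with `r`. -/
noncomputable def RML.sat {α : Type} (G : LabeledGraph α) : RML α → G.V → Prop
  | .atom p, v => G.label v p
  | .neg φ, v => ¬ RML.sat G φ v
  | .or φ ψ, v => RML.sat G φ v ∨ RML.sat G ψ v
  | .diaGe r φ, v => (G.nbhd v).Nonempty →
      (r : ℝ) ≤ ({u | G.adj v u ∧ RML.sat G φ u}.ncard : ℝ) / ((G.nbhd v).ncard : ℝ)
  | .diaGt r φ, v => (G.nbhd v).Nonempty ∧
      (r : ℝ) < ({u | G.adj v u ∧ RML.sat G φ u}.ncard : ℝ) / ((G.nbhd v).ncard : ℝ)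

/-- Formulas of AFML[1] (diamond fragment of alternation-free modal logic). -/
inductive AFML1 (α : Type) : Type where
  | atom   : α → AFML1 α
  | natom  : α → AFML1 α
  | boxBot : AFML1 α
  | and    : AFML1 α → AFML1 α → AFML1 α
  | or     : AFML1 α → AFML1 α → AFML1 α
  | dia    : AFML1 α → AFML1 α

/-- Satisfaction for AFML[1]. -/
def AFML1.sat {α : Type} (G : LabeledGraph α) : AFML1 α → G.V → Prop
  | .atom p, v => G.label v p
  | .natom p, v => ¬ G.label v p
  | .boxBot, v => ∀ u, ¬ G.adj v u
  | .and φ ψ, v => AFML1.sat G φ v ∧ AFML1.sat G ψ v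
  | .or φ ψ, v => AFML1.sat G φ v ∨ AFML1.sat G ψ v
  | .dia φ, v => ∃ u, G.adj v u ∧ AFML1.sat G φ u

/-- Modal depth of an AFML[1] formula. -/
def AFML1.depth {α : Type} : AFML1 α → ℕ
  | .atom _ => 0
  | .natom _ => 0
  | .boxBot => 1
  | .and φ ψ => max (AFML1.depth φ) (AFML1.depth ψ)
  | .or φ ψ => max (AFML1.depth φ) (AFML1.depth ψ)
  | .dia φ => AFML1.depth φ + 1

/-- Formulas of AFML[2] (box fragment of alternation-free modal logic). -/
inductive AFML2 (α : Type) : Type where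
  | atom   : α → AFML2 α
  | natom  : α → AFML2 α
  | diaTop : AFML2 α
  | and    : AFML2 α → AFML2 α → AFML2 α
  | or     : AFML2 α → AFML2 α → AFML2 α
  | box    : AFML2 α → AFML2 α

/-- Satisfaction for AFML[2]. -/
def AFML2.sat {α : Type} (G : LabeledGraph α) : AFML2 α → G.V → Prop
  | .atom p, v => G.label v p
  | .natom p, v => ¬ G.label v p
  | .diaTop, v => ∃ u, G.adj v u
  | .and φ ψ, v => AFML2.sat G φ v ∧ AFML2.sat G ψ v
  | .or φ ψ, v => AFML2.sat G φ v ∨ AFML2.sat G ψ v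
  | .box φ, v => ∀ u, G.adj v u → AFML2.sat G φ u

/-- Alternation-free modal logic: AFML[1] formulas together with AFML[2] formulas. -/
def AFML (α : Type) : Type := AFML1 α ⊕ AFML2 α

/-- Satisfaction for AFML. -/
def AFML.sat {α : Type} (G : LabeledGraph α) : AFML α → G.V → Prop
  | .inl φ => AFML1.sat G φ
  | .inr φ => AFML2.sat G φ

/-- The three aggregation functions. -/
inductive Agg : Type where
  | sum : Agg
  | mean : Agg
  | max : Agg

/-- Apply an aggregation function componentwise to the (multiset of) values of `x`
over the finset `s`; empty aggregation yields `0` (so mean of the empty multiset is `0`). -/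
noncomputable def Agg.apply {V : Type} : Agg → Finset V → (V → ℝ) → ℝ
  | .sum, s, x => ∑ u ∈ s, x u
  | .mean, s, x => (∑ u ∈ s, x u) / (s.card : ℝ)
  | .max, s, x => if h : s.Nonempty then s.sup' h x else 0

/-- A GNN: `L` layers, dimensions `δ 0, …, δ L` with `δ 0 = |α|`,
combination functions `com ℓ : ℝ^{δ ℓ} × ℝ^{δ ℓ} → ℝ^{δ (ℓ+1)}` for `ℓ < L`,
and a threshold classification function `CLS(x) = 1 iff x_clsIdx ∼ clsThr`
where `∼` is `>` if `clsStrict` and `≥` otherwise. -/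
structure GNN (α : Type) [Fintype α] : Type where
  L : ℕ
  δ : ℕ → ℕ
  hδ0 : δ 0 = Fintype.card α
  com : (ℓ : ℕ) → (Fin (δ ℓ) → ℝ) → (Fin (δ ℓ) → ℝ) → (Fin (δ (ℓ+1)) → ℝ)
  clsIdx : Fin (δ L)
  clsStrict : Bool
  clsThr : ℝ

/-- The feature vector computed by a GNN (with aggregation `agg`) at layer `ℓ`
at vertex `v` of graph `G`. Layer 0 yields the 0/1 indicator vector of the labels. -/
noncomputable def GNN.feat {α : Type} [Fintype α] (𝒢 : GNN α) (agg : Agg)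
    (G : LabeledGraph α) : (ℓ : ℕ) → G.V → Fin (𝒢.δ ℓ) → ℝ
  | 0, v, i => if G.label v ((Fintype.equivFin α).symm (Fin.cast 𝒢.hδ0 i)) then 1 else 0
  | (ℓ+1), v, i =>
      𝒢.com ℓ (𝒢.feat agg G ℓ v)
        (fun j => agg.apply (G.nbhdFinset v) (fun u => 𝒢.feat agg G ℓ u j)) i

/-- The GNN accepts a pointed graph iff the classification function outputs 1 on
the final feature vector. -/
noncomputable def GNN.accepts {α : Type} [Fintype α] (𝒢 : GNN α) (agg : Agg)
    (G : LabeledGraph α) (v : G.V) : Prop :=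
  if 𝒢.clsStrict then 𝒢.clsThr < 𝒢.feat agg G 𝒢.L v 𝒢.clsIdx
  else 𝒢.clsThr ≤ 𝒢.feat agg G 𝒢.L v 𝒢.clsIdx

/-- A GNN is simple with activation function `f` if each combination function
has the form `COM(x_v, x_a) = f(x_v·C + x_a·A + b)` (componentwise `f`). -/
def GNN.IsSimple {α : Type} [Fintype α] (𝒢 : GNN α) (f : ℝ → ℝ) : Prop :=
  ∀ ℓ < 𝒢.L, ∃ (C A : Fin (𝒢.δ ℓ) → Fin (𝒢.δ (ℓ+1)) → ℝ) (b : Fin (𝒢.δ (ℓ+1)) → ℝ),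
    ∀ (xv xa : Fin (𝒢.δ ℓ) → ℝ) (i : Fin (𝒢.δ (ℓ+1))),
      𝒢.com ℓ xv xa i = f ((∑ j, xv j * C j i) + (∑ j, xa j * A j i) + b i)

/-- All combination functions of the GNN are continuous. -/
def GNN.HasContinuousCom {α : Type} [Fintype α] (𝒢 : GNN α) : Prop :=
  ∀ ℓ < 𝒢.L,
    Continuous (fun p : (Fin (𝒢.δ ℓ) → ℝ) × (Fin (𝒢.δ ℓ) → ℝ) => 𝒢.com ℓ p.1 p.2)

/-- Truncated ReLU. -/
noncomputable def reluStar : ℝ → ℝ := fun x => min (max 0 x) 1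

/-- ReLU. -/
noncomputable def relu : ℝ → ℝ := fun x => max 0 x

/-- Two pointed graphs have the same vertex labels at their distinguished vertices. -/
def labelsEq {α : Type} (G1 G2 : LabeledGraph α) (v1 : G1.V) (v2 : G2.V) : Prop :=
  ∀ p, G1.label v1 p ↔ G2.label v2 p

/-- Spoiler wins the `ℓ`-round ML game on `((G1,v1),(G2,v2))`. -/
def spoilerWinsML {α : Type} (G1 G2 : LabeledGraph α) : ℕ → G1.V → G2.V → Prop
  | 0, v1, v2 => ¬ labelsEq G1 G2 v1 v2
  | (ℓ+1), v1, v2 =>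
      ¬ labelsEq G1 G2 v1 v2
      ∨ (∃ u1, G1.adj v1 u1 ∧ ∀ u2, G2.adj v2 u2 → spoilerWinsML G1 G2 ℓ u1 u2)
      ∨ (∃ u2, G2.adj v2 u2 ∧ ∀ u1, G1.adj v1 u1 → spoilerWinsML G1 G2 ℓ u1 u2)

/-- Spoiler wins the `ℓ`-round AFML[1] game on `((G1,v1),(G2,v2))`. -/
def spoilerWinsAFML1 {α : Type} (G1 G2 : LabeledGraph α) : ℕ → G1.V → G2.V → Prop
  | 0, v1, v2 => ¬ labelsEq G1 G2 v1 v2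
  | (ℓ+1), v1, v2 =>
      ¬ labelsEq G1 G2 v1 v2
      ∨ ((∀ u, ¬ G1.adj v1 u) ∧ (∃ u, G2.adj v2 u))
      ∨ (∃ u1, G1.adj v1 u1 ∧ ∀ u2, G2.adj v2 u2 → spoilerWinsAFML1 G1 G2 ℓ u1 u2)

/-- Spoiler wins the `ℓ`-round GML game with counting bound `c` on `((G1,v1),(G2,v2))`. -/
def spoilerWinsGML {α : Type} (c : ℕ) (G1 G2 : LabeledGraph α) : ℕ → G1.V → G2.V → Prop
  | 0, v1, v2 => ¬ labelsEq G1 G2 v1 v2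
  | (ℓ+1), v1, v2 =>
      ¬ labelsEq G1 G2 v1 v2
      ∨ (∃ U1 : Finset G1.V, (∀ u ∈ U1, G1.adj v1 u) ∧ 0 < U1.card ∧ U1.card ≤ c ∧
          ((G2.nbhd v2).ncard < U1.card ∨
            ∀ U2 : Finset G2.V, (∀ u ∈ U2, G2.adj v2 u) → U2.card = U1.card →
              ∃ u2 ∈ U2, ∀ u1 ∈ U1, spoilerWinsGML c G1 G2 ℓ u1 u2))
      ∨ (∃ U2 : Finset G2.V, (∀ u ∈ U2, G2.adj v2 u) ∧ 0 < U2.card ∧ U2.card ≤ c ∧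
          ((G1.nbhd v1).ncard < U2.card ∨
            ∀ U1 : Finset G1.V, (∀ u ∈ U1, G1.adj v1 u) → U1.card = U2.card →
              ∃ u1 ∈ U1, ∀ u2 ∈ U2, spoilerWinsGML c G1 G2 ℓ u1 u2))

/-- The ratio `1/2` as an element of `[0,1]`. -/
noncomputable def half : Set.Icc (0:ℝ) 1 := ⟨1/2, by norm_num⟩

/-- Max grade appearing in a GML formula. -/
def gd {α : Type} : GML α → ℕ
  | .atom _ => 0
  | .neg φ => gd φ
  | .or φ ψ => max (gd φ) (gd ψ)
  | .dia n φ => max n (gd φ)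

/-- Star graph: root `none`, `a` leaves labeled `P`, `b` unlabeled leaves. -/
abbrev Gab (α : Type) (P : α) (a b : ℕ) : LabeledGraph α where
  V := Option (Fin a ⊕ Fin b)
  adj := fun v u => v = none ∧ u ≠ none
  label := fun v p => (∃ i : Fin a, v = some (Sum.inl i)) ∧ p = P

/-- Truth of a GML formula at a leaf depends only on whether it is a P-leaf. -/
def lsat {α : Type} (P : α) : GML α → Bool → Prop
  | .atom p, s => s = true ∧ p = P
  | .neg φ, s => ¬ lsat P φ s
  | .or φ ψ, s => lsat P φ s ∨ lsat P ψ s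
  | .dia n _, _ => n = 0

lemma leaf_sat {α : Type} (P : α) (a b : ℕ) (φ : GML α) (x : Fin a ⊕ Fin b) :
    GML.sat (Gab α P a b) φ (some x) ↔ lsat P φ x.isLeft := by
  induction φ generalizing x with
  | atom p => cases x <;> simp [GML.sat, Gab, lsat]
  | neg φ ih => simp [GML.sat, lsat, ih]
  | or φ ψ ih1 ih2 => simp [GML.sat, lsat, ih1, ih2]
  | dia n φ ih =>
      have hempty : {u | (Gab α P a b).adj (some x) u ∧ GML.sat (Gab α P a b) φ u} = ∅ := by
        ext u; simp [Gab]
      simp [GML.sat, lsat, hempty]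

lemma ncard_pred {a b : ℕ} (p : Fin a ⊕ Fin b → Prop) (q1 q2 : Prop)
    (h1 : ∀ i, p (Sum.inl i) ↔ q1) (h2 : ∀ j, p (Sum.inr j) ↔ q2) :
    {x | p x}.ncard = (if q1 then a else 0) + (if q2 then b else 0) := by
  by_cases hq1 : q1 <;> by_cases hq2 : q2 <;> simp only [hq1, hq2, if_true, if_false]
  · have : {x | p x} = Set.univ := by
      ext x; cases x <;> simp [h1, h2, hq1, hq2]
    rw [this, Set.ncard_univ]
    simp [Nat.card_eq_fintype_card]
  · have : {x | p x} = Set.range Sum.inl := by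
      ext x; cases x <;> simp [h1, h2, hq1, hq2]
    rw [this, ← Nat.card_coe_set_eq,
      Nat.card_range_of_injective Sum.inl_injective]
    simp [Nat.card_eq_fintype_card]
  · have : {x | p x} = Set.range Sum.inr := by
      ext x; cases x <;> simp [h1, h2, hq1, hq2]
    rw [this, ← Nat.card_coe_set_eq,
      Nat.card_range_of_injective Sum.inr_injective]
    simp [Nat.card_eq_fintype_card]
  · have : {x | p x} = ∅ := by
      ext x; cases x <;> simp [h1, h2, hq1, hq2]
    simp [this]

lemma root_count {α : Type} (P : α) (a b : ℕ) (φ : GML α) :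
    {u | (Gab α P a b).adj none u ∧ GML.sat (Gab α P a b) φ u}.ncard
      = (if lsat P φ true then a else 0) + (if lsat P φ false then b else 0) := by
  have hset : {u | (Gab α P a b).adj none u ∧ GML.sat (Gab α P a b) φ u}
      = Option.some '' {x | lsat P φ x.isLeft} := by
    ext u
    cases u with
    | none => simp [Gab]
    | some x =>
        simp only [Set.mem_setOf_eq, Set.mem_image, leaf_sat]
        simp [Gab]
  rw [hset, Set.ncard_image_of_injective _ (Option.some_injective _)]
  exact ncard_pred _ (lsat P φ true) (lsat P φ false)
    (fun i => by simp) (fun j => by simp)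

lemma root_sat {α : Type} (P : α) (c : ℕ) (φ : GML α) (h : gd φ ≤ c) :
    (GML.sat (Gab α P (c+1) (c+1)) φ none ↔ GML.sat (Gab α P (c+1) (c+2)) φ none) := by
  induction φ with
  | atom p => simp [GML.sat, Gab]
  | neg φ ih => simp only [GML.sat]; rw [ih (by simpa [gd] using h)]
  | or φ ψ ih1 ih2 =>
      simp only [GML.sat]
      rw [ih1 (le_trans (le_max_left _ _) h), ih2 (le_trans (le_max_right _ _) h)]
  | dia n φ ih =>
      have hn : n ≤ c := le_trans (le_max_left _ _) (by simpa [gd] using h)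
      rw [GML.sat, GML.sat]
      rw [root_count, root_count]
      by_cases h1 : lsat P φ true <;> by_cases h2 : lsat P φ false <;>
        simp only [h1, h2, if_true, if_false] <;> omega

lemma rml_count {α : Type} (P : α) (a b : ℕ) :
    {u | (Gab α P a b).adj none u ∧ RML.sat (Gab α P a b) (RML.atom P) u}.ncard = a := by
  have hset : {u | (Gab α P a b).adj none u ∧ RML.sat (Gab α P a b) (RML.atom P) u}
      = Option.some '' {x : Fin a ⊕ Fin b | x.isLeft = true} := by
    ext u
    cases u with
    | none => simp [Gab]
    | some x => cases x <;> simp [Gab, RML.sat]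
  rw [hset, Set.ncard_image_of_injective _ (Option.some_injective _)]
  have := ncard_pred (a := a) (b := b) (fun x => x.isLeft = true) True False
    (fun i => by simp) (fun j => by simp)
  simpa using this

lemma nbhd_ncard {α : Type} (P : α) (a b : ℕ) :
    ((Gab α P a b).nbhd none).ncard = a + b := by
  have hset : (Gab α P a b).nbhd none = Option.some '' (Set.univ : Set (Fin a ⊕ Fin b)) := by
    ext u
    cases u with
    | none => simp [Gab, LabeledGraph.nbhd]
    | some x => simp [Gab, LabeledGraph.nbhd]
  rw [hset, Set.ncard_image_of_injective _ (Option.some_injective _), Set.ncard_univ]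
  simp [Nat.card_eq_fintype_card]

/-- There is no GML formula equivalent to the RML formula ◊^{≥1/2}P. -/
theorem stmt1 {α : Type} (P : α) :
    ¬ ∃ ψ : GML α, ∀ (G : LabeledGraph α) (v : G.V),
      GML.sat G ψ v ↔ RML.sat G (RML.diaGe half (RML.atom P)) v := by
  rintro ⟨ψ, hψ⟩
  set c := gd ψ with hc
  set N := c + 1 with hN
  have h1 := hψ (Gab α P N N) none
  have h2 := hψ (Gab α P N (N+1)) none
  have hroot := root_sat P c ψ (le_refl _)
  -- RML holds on Gab N N
  have hA : RML.sat (Gab α P N N) (RML.diaGe half (RML.atom P)) none := by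
    intro _
    rw [rml_count, nbhd_ncard]
    have hNpos : (0:ℝ) < (N:ℝ) := by positivity
    rw [show ((N:ℕ) + N : ℕ) = 2 * N by ring]
    have : ((N:ℝ)) / ((2*N : ℕ) : ℝ) = 1/2 := by
      push_cast
      field_simp
    rw [this]
    simp [half]
  -- RML fails on Gab N (N+1)
  have hB : ¬ RML.sat (Gab α P N (N+1)) (RML.diaGe half (RML.atom P)) none := by
    intro hsat
    have hne : ((Gab α P N (N+1)).nbhd none).Nonempty := by
      refine ⟨some (Sum.inl ⟨0, by omega⟩), ?_⟩
      simp [Gab, LabeledGraph.nbhd]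
    have := hsat hne
    rw [rml_count, nbhd_ncard] at this
    have hhalf : (half : ℝ) = 1/2 := rfl
    rw [hhalf] at this
    have hNpos : (0:ℝ) < ((N + (N+1) : ℕ) : ℝ) := by positivity
    rw [div_le_div_iff₀ (by norm_num) hNpos] at this
    push_cast at this
    -- 1 * (2N+1) ≤ 2 * N : contradiction
    nlinarith
  have hGA : GML.sat (Gab α P N N) ψ none := h1.mpr hA
  have hGB : GML.sat (Gab α P N (N+1)) ψ none := hroot.mp hGA
  exact hB (h2.mp hGB)
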